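/- Let H be Gâteaux differentiable on ℝ^d, and let a sequence {x_n} be generated by the convex-concave procedure for problem (P): x₀ is feasible for (P), and for each n, v_n ∈ ∂h₀(x_n) and x_{n+1} is a globally optimal solution of the convex problem: minimize g₀(x) − ⟨v_n, x − x_n⟩ subject to G(x) − H(x_n) − DH(x_n)(x − x_n) ⪯_K 0 and x ∈ A. Then every x_n is feasible for (P) (in particular the feasible region of each convex subproblem is nonempty), f₀(x_{n+1}) ≤ f₀(x_n) for all n, and if f₀ is bounded below on the feasible region of (P), the sequence {f₀(x_n)} converges. -/
import Mathlib


open scoped RealInnerProductSpace Pointwise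

/-- A function with values in a space ordered by a cone `K` is `K`-convex if
`Φ(αx₁ + (1−α)x₂) ⪯_K αΦ(x₁) + (1−α)Φ(x₂)` for all `x₁, x₂` and `α ∈ [0,1]`. -/
def KConvex {X Y : Type*} [AddCommGroup X] [Module ℝ X] [AddCommGroup Y] [Module ℝ Y]
    (K : Set Y) (Φ : X → Y) : Prop :=
  ∀ (x₁ x₂ : X) (α : ℝ), α ∈ Set.Icc (0 : ℝ) 1 →
    α • Φ x₁ + (1 - α) • Φ x₂ - Φ (α • x₁ + (1 - α) • x₂) ∈ K

/-- The subdifferential of a convex function `φ : ℝ^d → ℝ` at a point `x`. -/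
def subdiff {d : ℕ} (φ : EuclideanSpace ℝ (Fin d) → ℝ) (x : EuclideanSpace ℝ (Fin d)) :
    Set (EuclideanSpace ℝ (Fin d)) :=
  {w | ∀ y, φ x + ⟪w, y - x⟫ ≤ φ y}

theorem stmt_13 {d : ℕ} {Y : Type*}
    [NormedAddCommGroup Y] [NormedSpace ℝ Y] [CompleteSpace Y]
    (K : Set Y) (hKclosed : IsClosed K) (hKconvex : Convex ℝ K)
    (hKcone : ∀ c : ℝ, 0 ≤ c → ∀ y ∈ K, c • y ∈ K)
    (hKpointed : K ∩ (-K) = {0})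
    (g₀ h₀ : EuclideanSpace ℝ (Fin d) → ℝ)
    (hg₀ : ConvexOn ℝ Set.univ g₀) (hh₀ : ConvexOn ℝ Set.univ h₀)
    (G H : EuclideanSpace ℝ (Fin d) → Y)
    (hG : KConvex K G) (hH : KConvex K H)
    (A : Set (EuclideanSpace ℝ (Fin d))) (hAclosed : IsClosed A) (hAconvex : Convex ℝ A)
    -- H is Gâteaux differentiable on ℝ^d with derivative DH
    (DH : EuclideanSpace ℝ (Fin d) → EuclideanSpace ℝ (Fin d) →L[ℝ] Y)
    (hGateaux : ∀ p u, Filter.Tendsto (fun t : ℝ => t⁻¹ • (H (p + t • u) - H p))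
      (nhdsWithin 0 {(0 : ℝ)}ᶜ) (nhds (DH p u)))
    -- the sequence generated by the convex-concave procedure
    (x : ℕ → EuclideanSpace ℝ (Fin d)) (v : ℕ → EuclideanSpace ℝ (Fin d))
    (hx0 : x 0 ∈ A ∧ -(G (x 0) - H (x 0)) ∈ K)
    (hv : ∀ n, v n ∈ subdiff h₀ (x n))
    (hsol : ∀ n, (x (n + 1) ∈ A ∧
        -(G (x (n + 1)) - H (x n) - DH (x n) (x (n + 1) - x n)) ∈ K) ∧
      ∀ y, y ∈ A → -(G y - H (x n) - DH (x n) (y - x n)) ∈ K →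
        g₀ (x (n + 1)) - ⟪v n, x (n + 1) - x n⟫ ≤ g₀ y - ⟪v n, y - x n⟫) :
    (∀ n, {y | y ∈ A ∧ -(G y - H (x n) - DH (x n) (y - x n)) ∈ K}.Nonempty) ∧
    (∀ n, x n ∈ A ∧ -(G (x n) - H (x n)) ∈ K) ∧
    (∀ n, g₀ (x (n + 1)) - h₀ (x (n + 1)) ≤ g₀ (x n) - h₀ (x n)) ∧
    ((∃ B : ℝ, ∀ y, y ∈ A → -(G y - H y) ∈ K → B ≤ g₀ y - h₀ y) →
      ∃ L : ℝ, Filter.Tendsto (fun n => g₀ (x n) - h₀ (x n)) Filter.atTop (nhds L)) := by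

  -- K is closed under addition
  have hKadd : ∀ y ∈ K, ∀ z ∈ K, y + z ∈ K := by
    intro y hy z hz
    have h2 : ((1:ℝ)/2) • y + ((1:ℝ)/2) • z ∈ K :=
      hKconvex hy hz (by norm_num) (by norm_num) (by norm_num)
    have := hKcone 2 (by norm_num) _ h2
    have heq : (2:ℝ) • (((1:ℝ)/2) • y + ((1:ℝ)/2) • z) = y + z := by
      rw [smul_add, smul_smul, smul_smul]; norm_num
    rwa [heq] at this
  -- gradient inequality for K-convex H
  have hgrad : ∀ p u, H (p + u) - H p - DH p u ∈ K := by
    intro p u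
    have hmono : nhdsWithin (0:ℝ) (Set.Ioi 0) ≤ nhdsWithin 0 {(0:ℝ)}ᶜ :=
      nhdsWithin_mono 0 (fun t ht => ne_of_gt ht)
    have htend : Filter.Tendsto (fun t : ℝ => H (p + u) - H p - t⁻¹ • (H (p + t • u) - H p))
        (nhdsWithin (0:ℝ) (Set.Ioi 0)) (nhds (H (p + u) - H p - DH p u)) :=
      Filter.Tendsto.sub tendsto_const_nhds ((hGateaux p u).mono_left hmono)
    have hev : ∀ᶠ t in nhdsWithin (0:ℝ) (Set.Ioi 0),
        H (p + u) - H p - t⁻¹ • (H (p + t • u) - H p) ∈ K := by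
      filter_upwards [Ioc_mem_nhdsGT_of_mem (Set.left_mem_Ico.mpr one_pos)] with t ht
      have hm := hH (p + u) p t ⟨le_of_lt ht.1, ht.2⟩
      have harg : t • (p + u) + (1 - t) • p = p + t • u := by module
      rw [harg] at hm
      have := hKcone t⁻¹ (le_of_lt (inv_pos.mpr ht.1)) _ hm
      have heq : t⁻¹ • (t • H (p + u) + (1 - t) • H p - H (p + t • u))
          = H (p + u) - H p - t⁻¹ • (H (p + t • u) - H p) := by
        have ht0 : t ≠ 0 := ne_of_gt ht.1
        match_scalars <;> field_simp <;> ring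
      rwa [heq] at this
    exact hKclosed.mem_of_tendsto htend hev
  -- feasibility of all x n
  have hfeas : ∀ n, x n ∈ A ∧ -(G (x n) - H (x n)) ∈ K := by
    intro n
    induction n with
    | zero => exact hx0
    | succ m ih =>
      refine ⟨((hsol m).1).1, ?_⟩
      have hc := ((hsol m).1).2
      have hk := hgrad (x m) (x (m + 1) - x m)
      rw [add_sub_cancel] at hk
      have := hKadd _ hc _ hk
      have heq : -(G (x (m + 1)) - H (x m) - DH (x m) (x (m + 1) - x m))
          + (H (x (m + 1)) - H (x m) - DH (x m) (x (m + 1) - x m))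
          = -(G (x (m + 1)) - H (x (m + 1))) := by abel
      rwa [heq] at this
  -- x n is feasible for subproblem n
  have hsubfeas : ∀ n, -(G (x n) - H (x n) - DH (x n) (x n - x n)) ∈ K := by
    intro n
    simpa [sub_self] using (hfeas n).2
  -- monotone decrease
  have hdec : ∀ n, g₀ (x (n + 1)) - h₀ (x (n + 1)) ≤ g₀ (x n) - h₀ (x n) := by
    intro n
    have hopt := (hsol n).2 (x n) (hfeas n).1 (hsubfeas n)
    simp only [sub_self, inner_zero_right, sub_zero] at hopt
    have hsub := hv n (x (n + 1))
    -- h₀ (x n) + ⟪v n, x (n+1) - x n⟫ ≤ h₀ (x (n+1))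
    linarith [hsub]
  refine ⟨fun n => ⟨x n, (hfeas n).1, hsubfeas n⟩, hfeas, hdec, ?_⟩
  rintro ⟨B, hB⟩
  have hanti : Antitone (fun n => g₀ (x n) - h₀ (x n)) := antitone_nat_of_succ_le hdec
  have hbdd : BddBelow (Set.range fun n => g₀ (x n) - h₀ (x n)) := by
    refine ⟨B, ?_⟩
    rintro r ⟨n, rfl⟩
    exact hB (x n) (hfeas n).1 (hfeas n).2
  exact ⟨_, tendsto_atTop_ciInf hanti hbdd⟩
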